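/- Let R be an algebraic curvature tensor on a 3-dimensional real inner product space E and let {v₁, v₂, v₃} be an orthonormal basis of E diagonalizing the Ricci form of R. If u = c₁v₁ + c₂v₂ + c₃v₃ is a unit vector and x, y ∈ E are orthonormal vectors both orthogonal to u, then R(x,y,y,x) = c₁²·sec(v₂∧v₃) + c₂²·sec(v₃∧v₁) + c₃²·sec(v₁∧v₂), where sec(v_i∧v_j) = R(v_i, v_j, v_j, v_i). That is, the sectional curvature of the 2-plane orthogonal to u is the weighted combination of the three eigen-sectional-curvatures with weights c_i². -/

import Mathlib

open scoped RealInnerProductSpace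

/-- An algebraic curvature tensor on a real inner product space `E`: a multilinear map
`R : E × E × E × E → ℝ` with the symmetries of the Riemann curvature tensor. -/
structure AlgCurvTensor (E : Type*) [NormedAddCommGroup E] [InnerProductSpace ℝ E] where
  R : E →ₗ[ℝ] E →ₗ[ℝ] E →ₗ[ℝ] E →ₗ[ℝ] ℝ
  antisym_fst : ∀ x y z w : E, R x y z w = - R y x z w
  antisym_snd : ∀ x y z w : E, R x y z w = - R x y w z
  pair_symm : ∀ x y z w : E, R x y z w = R z w x y
  bianchi : ∀ x y z w : E, R x y z w + R y z x w + R z x y w = 0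

/-- The Ricci form `Ric(x,y) = Σᵢ R(eᵢ, x, y, eᵢ)`, computed in the orthonormal basis `b`
(the result is independent of the choice of orthonormal basis). -/
noncomputable def AlgCurvTensor.ricci {E : Type*} [NormedAddCommGroup E]
    [InnerProductSpace ℝ E] (T : AlgCurvTensor E) (b : OrthonormalBasis (Fin 3) ℝ E)
    (x y : E) : ℝ :=
  ∑ i : Fin 3, T.R (b i) x y (b i)

set_option maxHeartbeats 2000000 in
/-- Let `{v₁, v₂, v₃}` be an orthonormal basis diagonalizing the Ricci form of an algebraic
curvature tensor `R` on a `3`-dimensional inner product space. If `u = c₁v₁ + c₂v₂ + c₃v₃`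
is a unit vector and `x, y` are orthonormal vectors orthogonal to `u`, then
`sec(x∧y) = R(x,y,y,x) = c₁²·sec(v₂∧v₃) + c₂²·sec(v₃∧v₁) + c₃²·sec(v₁∧v₂)`. -/
theorem sec_of_plane_orthogonal_to_vector {E : Type*} [NormedAddCommGroup E]
    [InnerProductSpace ℝ E] (b : OrthonormalBasis (Fin 3) ℝ E) (T : AlgCurvTensor E)
    (hdiag : ∀ i j : Fin 3, i ≠ j → T.ricci b (b i) (b j) = 0)
    (c : Fin 3 → ℝ) (hu : ‖c 0 • b 0 + c 1 • b 1 + c 2 • b 2‖ = 1)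
    (x y : E) (hx : ‖x‖ = 1) (hy : ‖y‖ = 1) (hxy : ⟪x, y⟫ = 0)
    (hxu : ⟪c 0 • b 0 + c 1 • b 1 + c 2 • b 2, x⟫ = 0)
    (hyu : ⟪c 0 • b 0 + c 1 • b 1 + c 2 • b 2, y⟫ = 0) :
    T.R x y y x =
      (c 0) ^ 2 * T.R (b 1) (b 2) (b 2) (b 1)
      + (c 1) ^ 2 * T.R (b 2) (b 0) (b 0) (b 2)
      + (c 2) ^ 2 * T.R (b 0) (b 1) (b 1) (b 0) := by
  have h1 : ∀ v z w : E, T.R v v z w = 0 := fun v z w => by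
    have h := T.antisym_fst v v z w; linarith
  have h2 : ∀ v z w : E, T.R v z w w = 0 := fun v z w => by
    have h := T.antisym_snd v z w w; linarith
  have z201 : T.R (b 2) (b 0) (b 1) (b 2) = 0 := by
    have h := hdiag 0 1 (by decide)
    simpa [AlgCurvTensor.ricci, Fin.sum_univ_three, h1, h2] using h
  have z102 : T.R (b 1) (b 0) (b 2) (b 1) = 0 := by
    have h := hdiag 0 2 (by decide)
    simpa [AlgCurvTensor.ricci, Fin.sum_univ_three, h1, h2] using h
  have z210 : T.R (b 2) (b 1) (b 0) (b 2) = 0 := by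
    have h := hdiag 1 0 (by decide)
    simpa [AlgCurvTensor.ricci, Fin.sum_univ_three, h1, h2] using h
  have z012 : T.R (b 0) (b 1) (b 2) (b 0) = 0 := by
    have h := hdiag 1 2 (by decide)
    simpa [AlgCurvTensor.ricci, Fin.sum_univ_three, h1, h2] using h
  have z120 : T.R (b 1) (b 2) (b 0) (b 1) = 0 := by
    have h := hdiag 2 0 (by decide)
    simpa [AlgCurvTensor.ricci, Fin.sum_univ_three, h1, h2] using h
  have z021 : T.R (b 0) (b 2) (b 1) (b 0) = 0 := by
    have h := hdiag 2 1 (by decide)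
    simpa [AlgCurvTensor.ricci, Fin.sum_univ_three, h1, h2] using h
  have m0102 : T.R (b 0) (b 1) (b 0) (b 2) = 0 := by
    rw [T.antisym_snd]; simp [z012]
  have m0112 : T.R (b 0) (b 1) (b 1) (b 2) = 0 := by
    rw [T.antisym_fst, T.antisym_snd]; simp [z102]
  have m0120 : T.R (b 0) (b 1) (b 2) (b 0) = 0 := z012
  have m0121 : T.R (b 0) (b 1) (b 2) (b 1) = 0 := by
    rw [T.antisym_fst]; simp [z102]
  have m0201 : T.R (b 0) (b 2) (b 0) (b 1) = 0 := by
    rw [T.antisym_snd]; simp [z021]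
  have m0210 : T.R (b 0) (b 2) (b 1) (b 0) = 0 := z021
  have m0212 : T.R (b 0) (b 2) (b 1) (b 2) = 0 := by
    rw [T.antisym_fst]; simp [z201]
  have m0221 : T.R (b 0) (b 2) (b 2) (b 1) = 0 := by
    rw [T.antisym_fst, T.antisym_snd]; simp [z201]
  have m1002 : T.R (b 1) (b 0) (b 0) (b 2) = 0 := by
    rw [T.antisym_fst, T.antisym_snd]; simp [z012]
  have m1012 : T.R (b 1) (b 0) (b 1) (b 2) = 0 := by
    rw [T.antisym_snd]; simp [z102]
  have m1020 : T.R (b 1) (b 0) (b 2) (b 0) = 0 := by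
    rw [T.antisym_fst]; simp [z012]
  have m1021 : T.R (b 1) (b 0) (b 2) (b 1) = 0 := z102
  have m1201 : T.R (b 1) (b 2) (b 0) (b 1) = 0 := z120
  have m1202 : T.R (b 1) (b 2) (b 0) (b 2) = 0 := by
    rw [T.antisym_fst]; simp [z210]
  have m1210 : T.R (b 1) (b 2) (b 1) (b 0) = 0 := by
    rw [T.antisym_snd]; simp [z120]
  have m1220 : T.R (b 1) (b 2) (b 2) (b 0) = 0 := by
    rw [T.antisym_fst, T.antisym_snd]; simp [z210]
  have m2001 : T.R (b 2) (b 0) (b 0) (b 1) = 0 := by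
    rw [T.antisym_fst, T.antisym_snd]; simp [z021]
  have m2010 : T.R (b 2) (b 0) (b 1) (b 0) = 0 := by
    rw [T.antisym_fst]; simp [z021]
  have m2012 : T.R (b 2) (b 0) (b 1) (b 2) = 0 := z201
  have m2021 : T.R (b 2) (b 0) (b 2) (b 1) = 0 := by
    rw [T.antisym_snd]; simp [z201]
  have m2101 : T.R (b 2) (b 1) (b 0) (b 1) = 0 := by
    rw [T.antisym_fst]; simp [z120]
  have m2102 : T.R (b 2) (b 1) (b 0) (b 2) = 0 := z210
  have m2110 : T.R (b 2) (b 1) (b 1) (b 0) = 0 := by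
    rw [T.antisym_fst, T.antisym_snd]; simp [z120]
  have m2120 : T.R (b 2) (b 1) (b 2) (b 0) = 0 := by
    rw [T.antisym_snd]; simp [z210]
  have n1001 : T.R (b 1) (b 0) (b 0) (b 1) = T.R (b 0) (b 1) (b 1) (b 0) := by
    rw [T.antisym_fst, T.antisym_snd, neg_neg]
  have n0101 : T.R (b 0) (b 1) (b 0) (b 1) = -(T.R (b 0) (b 1) (b 1) (b 0)) := by rw [T.antisym_snd]
  have n1010 : T.R (b 1) (b 0) (b 1) (b 0) = -(T.R (b 0) (b 1) (b 1) (b 0)) := by rw [T.antisym_fst]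
  have n2112 : T.R (b 2) (b 1) (b 1) (b 2) = T.R (b 1) (b 2) (b 2) (b 1) := by
    rw [T.antisym_fst, T.antisym_snd, neg_neg]
  have n1212 : T.R (b 1) (b 2) (b 1) (b 2) = -(T.R (b 1) (b 2) (b 2) (b 1)) := by rw [T.antisym_snd]
  have n2121 : T.R (b 2) (b 1) (b 2) (b 1) = -(T.R (b 1) (b 2) (b 2) (b 1)) := by rw [T.antisym_fst]
  have n0220 : T.R (b 0) (b 2) (b 2) (b 0) = T.R (b 2) (b 0) (b 0) (b 2) := by
    rw [T.antisym_fst, T.antisym_snd, neg_neg]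
  have n2020 : T.R (b 2) (b 0) (b 2) (b 0) = -(T.R (b 2) (b 0) (b 0) (b 2)) := by rw [T.antisym_snd]
  have n0202 : T.R (b 0) (b 2) (b 0) (b 2) = -(T.R (b 2) (b 0) (b 0) (b 2)) := by rw [T.antisym_fst]
  -- scalar constraints
  have hob : ∀ i j : Fin 3, (⟪b i, b j⟫ : ℝ) = if i = j then 1 else 0 :=
    orthonormal_iff_ite.mp b.orthonormal
  have hxx1 : (⟪x, x⟫ : ℝ) = 1 := by
    rw [real_inner_self_eq_norm_sq, hx]; norm_num
  have hyy1 : (⟪y, y⟫ : ℝ) = 1 := by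
    rw [real_inner_self_eq_norm_sq, hy]; norm_num
  have huu1 : (⟪c 0 • b 0 + c 1 • b 1 + c 2 • b 2, c 0 • b 0 + c 1 • b 1 + c 2 • b 2⟫ : ℝ) = 1 := by
    rw [real_inner_self_eq_norm_sq, hu]; norm_num
  have ha := b.sum_inner_mul_inner x x
  have hd := b.sum_inner_mul_inner y y
  have had := b.sum_inner_mul_inner x y
  rw [hxx1] at ha
  rw [hyy1] at hd
  rw [hxy] at had
  simp only [Fin.sum_univ_three, real_inner_comm (b 0) x, real_inner_comm (b 1) x,
    real_inner_comm (b 2) x, real_inner_comm (b 0) y, real_inner_comm (b 1) y,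
    real_inner_comm (b 2) y] at ha hd had
  simp only [inner_add_left, inner_add_right, real_inner_smul_left, real_inner_smul_right,
    hob] at hxu hyu huu1
  simp only [Fin.reduceEq, reduceIte] at huu1
  -- expand the curvature term
  have hxx : x = ∑ i, (⟪b i, x⟫ : ℝ) • b i := (b.sum_repr' x).symm
  have hyy : y = ∑ i, (⟪b i, y⟫ : ℝ) • b i := (b.sum_repr' y).symm
  rw [hxx, hyy]
  simp only [Fin.sum_univ_three, map_add, map_smul, LinearMap.add_apply,
    LinearMap.smul_apply, smul_eq_mul]
  simp only [m0102, m0112, m0120, m0121, m0201, m0210, m0212, m0221, m1002, m1012, m1020, m1021, m1201, m1202, m1210, m1220, m2001, m2010, m2012, m2021, m2101, m2102, m2110, m2120, n1001, n0101, n1010, n2112, n1212, n2121, n0220, n2020, n0202, h1, h2]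
  set a0 : ℝ := inner ℝ (b 0) x with ha0
  set a1 : ℝ := inner ℝ (b 1) x with ha1
  set a2 : ℝ := inner ℝ (b 2) x with ha2
  set d0 : ℝ := inner ℝ (b 0) y with hd0
  set d1 : ℝ := inner ℝ (b 1) y with hd1
  set d2 : ℝ := inner ℝ (b 2) y with hd2
  -- cross-product identities
  have hw : (a1 * d2 - a2 * d1)^2 + (a2 * d0 - a0 * d2)^2 + (a0 * d1 - a1 * d0)^2 = 1 := by
    linear_combination (d0^2 + d1^2 + d2^2) * ha + hd - (a0*d0 + a1*d1 + a2*d2) * had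
  have heps : (c 0 * (a1 * d2 - a2 * d1) + c 1 * (a2 * d0 - a0 * d2) + c 2 * (a0 * d1 - a1 * d0))^2 = 1 := by
    linear_combination ((a0^2 + a1^2 + a2^2)*(d0^2 + d1^2 + d2^2) - (a0*d0 + a1*d1 + a2*d2)^2) * huu1 + (d0^2 + d1^2 + d2^2) * ha + hd - (a0*d0 + a1*d1 + a2*d2) * had
      - ((c 0 * a0 + c 1 * a1 + c 2 * a2)*(d0^2 + d1^2 + d2^2) - (a0*d0 + a1*d1 + a2*d2)*(c 0 * d0 + c 1 * d1 + c 2 * d2)) * hxu + ((c 0 * a0 + c 1 * a1 + c 2 * a2)*(a0*d0 + a1*d1 + a2*d2) - (a0^2 + a1^2 + a2^2)*(c 0 * d0 + c 1 * d1 + c 2 * d2)) * hyu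
  have hnorm : (c 0 - (c 0 * (a1 * d2 - a2 * d1) + c 1 * (a2 * d0 - a0 * d2) + c 2 * (a0 * d1 - a1 * d0)) * (a1 * d2 - a2 * d1))^2 + (c 1 - (c 0 * (a1 * d2 - a2 * d1) + c 1 * (a2 * d0 - a0 * d2) + c 2 * (a0 * d1 - a1 * d0)) * (a2 * d0 - a0 * d2))^2
      + (c 2 - (c 0 * (a1 * d2 - a2 * d1) + c 1 * (a2 * d0 - a0 * d2) + c 2 * (a0 * d1 - a1 * d0)) * (a0 * d1 - a1 * d0))^2 = 0 := by
    linear_combination huu1 + (c 0 * (a1 * d2 - a2 * d1) + c 1 * (a2 * d0 - a0 * d2) + c 2 * (a0 * d1 - a1 * d0))^2 * hw - heps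
  have s0 := sq_nonneg (c 0 - (c 0 * (a1 * d2 - a2 * d1) + c 1 * (a2 * d0 - a0 * d2) + c 2 * (a0 * d1 - a1 * d0)) * (a1 * d2 - a2 * d1))
  have s1 := sq_nonneg (c 1 - (c 0 * (a1 * d2 - a2 * d1) + c 1 * (a2 * d0 - a0 * d2) + c 2 * (a0 * d1 - a1 * d0)) * (a2 * d0 - a0 * d2))
  have s2 := sq_nonneg (c 2 - (c 0 * (a1 * d2 - a2 * d1) + c 1 * (a2 * d0 - a0 * d2) + c 2 * (a0 * d1 - a1 * d0)) * (a0 * d1 - a1 * d0))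
  have he0 : (c 0 - (c 0 * (a1 * d2 - a2 * d1) + c 1 * (a2 * d0 - a0 * d2) + c 2 * (a0 * d1 - a1 * d0)) * (a1 * d2 - a2 * d1))^2 = 0 := by linarith
  have he1 : (c 1 - (c 0 * (a1 * d2 - a2 * d1) + c 1 * (a2 * d0 - a0 * d2) + c 2 * (a0 * d1 - a1 * d0)) * (a2 * d0 - a0 * d2))^2 = 0 := by linarith
  have he2 : (c 2 - (c 0 * (a1 * d2 - a2 * d1) + c 1 * (a2 * d0 - a0 * d2) + c 2 * (a0 * d1 - a1 * d0)) * (a0 * d1 - a1 * d0))^2 = 0 := by linarith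
  have hq0 : c 0 = (c 0 * (a1 * d2 - a2 * d1) + c 1 * (a2 * d0 - a0 * d2) + c 2 * (a0 * d1 - a1 * d0)) * (a1 * d2 - a2 * d1) := by
    have := sq_eq_zero_iff.mp he0; linarith
  have hq1 : c 1 = (c 0 * (a1 * d2 - a2 * d1) + c 1 * (a2 * d0 - a0 * d2) + c 2 * (a0 * d1 - a1 * d0)) * (a2 * d0 - a0 * d2) := by
    have := sq_eq_zero_iff.mp he1; linarith
  have hq2 : c 2 = (c 0 * (a1 * d2 - a2 * d1) + c 1 * (a2 * d0 - a0 * d2) + c 2 * (a0 * d1 - a1 * d0)) * (a0 * d1 - a1 * d0) := by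
    have := sq_eq_zero_iff.mp he2; linarith
  have hw0 : (c 0)^2 = (a1 * d2 - a2 * d1)^2 := by
    rw [hq0]; linear_combination (a1 * d2 - a2 * d1)^2 * heps
  have hw1 : (c 1)^2 = (a2 * d0 - a0 * d2)^2 := by
    rw [hq1]; linear_combination (a2 * d0 - a0 * d2)^2 * heps
  have hw2 : (c 2)^2 = (a0 * d1 - a1 * d0)^2 := by
    rw [hq2]; linear_combination (a0 * d1 - a1 * d0)^2 * heps
  linear_combination (-(T.R (b 1) (b 2) (b 2) (b 1))) * hw0
    + (-(T.R (b 2) (b 0) (b 0) (b 2))) * hw1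
    + (-(T.R (b 0) (b 1) (b 1) (b 0))) * hw2
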